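/- arXiv:1211.5422 — 2 statements merged into one kernel-verified Lean document; each statement's English description precedes it below -/
import Mathlib

section
/- For $\sigma \in (0,1)$, $\beta > 0$, and integers $1 \le j \le n$, define $V_{n,j} = \frac{e^\beta \sigma^{j-1}}{\Gamma(n)} \sum_{l=0}^{n-1} \binom{n-1}{l}(-1)^l \beta^{l/\sigma} \Gamma\left(j - \frac{l}{\sigma}; \beta\right)$, where $\Gamma(a;x) = \int_x^\infty y^{a-1}e^{-y}\,dy$. Then the Gibbs recursion $V_{n,j} = V_{n+1,j+1} + (n - j\sigma) V_{n+1,j}$ holds. -/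
open MeasureTheory Real Set Finset

/-- Upper incomplete gamma function `Γ(a; x) = ∫_x^∞ y^(a-1) e^(-y) dy`. -/
noncomputable def incGamma (a x : ℝ) : ℝ :=
  ∫ y in Set.Ioi x, y ^ (a - 1) * Real.exp (-y)

open Filter in
lemma integrableOn_rpow_exp (a x : ℝ) (hx : 0 < x) :
    IntegrableOn (fun y : ℝ => y ^ a * Real.exp (-y)) (Ioi x) := by
  apply integrable_of_isBigO_exp_neg (one_half_pos)
  · intro y hy
    have hy0 : (0:ℝ) < y := lt_of_lt_of_le hx hy
    exact ((Real.continuousAt_rpow_const y a (Or.inl hy0.ne')).mul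
      (Real.continuous_exp.comp continuous_neg).continuousAt).continuousWithinAt
  · have h := tendsto_rpow_mul_exp_neg_mul_atTop_nhds_zero a (1/2) one_half_pos
    have heq : (fun y : ℝ => y ^ a * Real.exp (-y)) =
        fun y => (y ^ a * Real.exp (-(1/2) * y)) * Real.exp (-(1/2) * y) := by
      funext y
      rw [mul_assoc, ← Real.exp_add]
      ring_nf
    rw [heq]
    calc (fun y : ℝ => (y ^ a * Real.exp (-(1/2) * y)) * Real.exp (-(1/2) * y))
        =O[atTop] fun y => (1:ℝ) * Real.exp (-(1/2) * y) :=
          (h.isBigO_one ℝ).mul (Asymptotics.isBigO_refl _ _)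
      _ = fun y => Real.exp (-(1/2) * y) := by funext y; rw [one_mul]

lemma incGamma_succ (a x : ℝ) (hx : 0 < x) :
    incGamma (a + 1) x = a * incGamma a x + x ^ a * Real.exp (-x) := by
  have hint1 := integrableOn_rpow_exp a x hx
  have hint2 := (integrableOn_rpow_exp (a - 1) x hx).const_mul a
  have key : ∫ y in Ioi x, (y ^ a * Real.exp (-y) - a * (y ^ (a - 1) * Real.exp (-y)))
      = 0 - (-(x ^ a * Real.exp (-x))) := by
    apply integral_Ioi_of_hasDerivAt_of_tendsto'
      (f := fun y => -(y ^ a * Real.exp (-y)))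
    · intro y hy
      have hy0 : (0:ℝ) < y := lt_of_lt_of_le hx hy
      have h1 : HasDerivAt (fun y : ℝ => y ^ a) (a * y ^ (a - 1)) y :=
        Real.hasDerivAt_rpow_const (Or.inl hy0.ne')
      have h2 : HasDerivAt (fun y : ℝ => Real.exp (-y)) (-Real.exp (-y)) y := by
        simpa [Function.comp_def] using (Real.hasDerivAt_exp (-y)).comp y (hasDerivAt_neg y)
      have h3 := (h1.mul h2).neg
      convert h3 using 1
      · rfl
      ring
    · exact hint1.sub hint2
    · have h := (tendsto_rpow_mul_exp_neg_mul_atTop_nhds_zero a 1 one_pos).neg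
      simpa [neg_one_mul] using h
  rw [MeasureTheory.integral_sub hint1 hint2, MeasureTheory.integral_const_mul] at key
  simp only [incGamma, add_sub_cancel_right]
  linarith [key]

lemma choose_aux (n l : ℕ) (h : l < n) :
    (n - l) * n.choose l = n * (n - 1).choose l := by
  obtain ⟨m, rfl⟩ : ∃ m, n = m + 1 := ⟨n - 1, by omega⟩
  have h1 := Nat.add_one_mul_choose_eq m l
  have h2 := Nat.choose_succ_right_eq (m + 1) l
  simp only [Nat.add_sub_cancel]
  rw [mul_comm (m + 1 - l), ← h2, ← h1, mul_comm]

noncomputable def Vngg (σ β : ℝ) (n j : ℕ) : ℝ :=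
  (Real.exp β * σ ^ (j - 1) / Real.Gamma n) *
    ∑ l ∈ Finset.range n, ((n - 1).choose l : ℝ) * (-1 : ℝ) ^ l * β ^ ((l : ℝ) / σ) *
      incGamma ((j : ℝ) - (l : ℝ) / σ) β

theorem ngg_gibbs_recursion
    (σ β : ℝ) (hσ0 : 0 < σ) (hσ1 : σ < 1) (hβ : 0 < β)
    (n j : ℕ) (hj1 : 1 ≤ j) (hjn : j ≤ n) :
    Vngg σ β n j
      = Vngg σ β (n + 1) (j + 1) + ((n : ℝ) - (j : ℝ) * σ) * Vngg σ β (n + 1) j := by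
  have hn0 : n ≠ 0 := by omega
  have G : ℕ → ℝ := fun l => incGamma ((j : ℝ) - (l : ℝ) / σ) β
  -- the key sum identity
  have key : σ * (∑ l ∈ Finset.range (n + 1), (n.choose l : ℝ) * (-1 : ℝ) ^ l *
        β ^ ((l : ℝ) / σ) * incGamma ((j : ℝ) + 1 - (l : ℝ) / σ) β)
      + ((n : ℝ) - (j : ℝ) * σ) * (∑ l ∈ Finset.range (n + 1), (n.choose l : ℝ) * (-1 : ℝ) ^ l *
        β ^ ((l : ℝ) / σ) * incGamma ((j : ℝ) - (l : ℝ) / σ) β)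
      = (n : ℝ) * ∑ l ∈ Finset.range n, ((n - 1).choose l : ℝ) * (-1 : ℝ) ^ l *
        β ^ ((l : ℝ) / σ) * incGamma ((j : ℝ) - (l : ℝ) / σ) β := by
    have step1 : σ * (∑ l ∈ Finset.range (n + 1), (n.choose l : ℝ) * (-1 : ℝ) ^ l *
          β ^ ((l : ℝ) / σ) * incGamma ((j : ℝ) + 1 - (l : ℝ) / σ) β)
        + ((n : ℝ) - (j : ℝ) * σ) * (∑ l ∈ Finset.range (n + 1), (n.choose l : ℝ) * (-1 : ℝ) ^ l *
          β ^ ((l : ℝ) / σ) * incGamma ((j : ℝ) - (l : ℝ) / σ) β)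
        = (∑ l ∈ Finset.range (n + 1), ((n : ℝ) - (l : ℝ)) * (n.choose l : ℝ) * (-1 : ℝ) ^ l *
            β ^ ((l : ℝ) / σ) * incGamma ((j : ℝ) - (l : ℝ) / σ) β)
          + (σ * Real.exp (-β) * β ^ ((j : ℝ))) *
            ∑ l ∈ Finset.range (n + 1), (-1 : ℝ) ^ l * (n.choose l : ℝ) := by
      rw [Finset.mul_sum, Finset.mul_sum, Finset.mul_sum, ← Finset.sum_add_distrib,
        ← Finset.sum_add_distrib]
      apply Finset.sum_congr rfl
      intro l _
      have harg : (j : ℝ) + 1 - (l : ℝ) / σ = ((j : ℝ) - (l : ℝ) / σ) + 1 := by ring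
      rw [harg, incGamma_succ _ _ hβ]
      have hc : (l : ℝ) / σ * σ = (l : ℝ) := div_mul_cancel₀ _ hσ0.ne'
      have hb : β ^ ((l : ℝ) / σ) * β ^ ((j : ℝ) - (l : ℝ) / σ) = β ^ ((j : ℝ)) := by
        rw [← Real.rpow_add hβ]; ring_nf
      linear_combination ((n.choose l : ℝ) * (-1 : ℝ) ^ l * σ * Real.exp (-β)) * hb
        - ((n.choose l : ℝ) * (-1 : ℝ) ^ l * incGamma ((j : ℝ) - (l : ℝ) / σ) β
            * β ^ ((l : ℝ) / σ)) * hc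
    rw [step1]
    have halt : ∑ l ∈ Finset.range (n + 1), (-1 : ℝ) ^ l * (n.choose l : ℝ) = 0 := by
      have h := Int.alternating_sum_range_choose_of_ne hn0
      exact_mod_cast congrArg (Int.cast : ℤ → ℝ) h
    rw [halt, mul_zero, add_zero, Finset.sum_range_succ]
    simp only [sub_self, zero_mul]
    rw [add_zero, Finset.mul_sum]
    apply Finset.sum_congr rfl
    intro l hl
    have hl' : l < n := Finset.mem_range.mp hl
    have hcast : ((n : ℝ) - (l : ℝ)) * (n.choose l : ℝ) = (n : ℝ) * ((n - 1).choose l : ℝ) := by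
      have h2 : ((n - l : ℕ) : ℝ) = (n : ℝ) - (l : ℝ) := Nat.cast_sub hl'.le
      rw [← h2]
      exact_mod_cast choose_aux n l hl'
    linear_combination ((-1 : ℝ) ^ l * β ^ ((l : ℝ) / σ) * incGamma ((j : ℝ) - (l : ℝ) / σ) β) * hcast
  -- now assemble
  have hΓpos : 0 < Real.Gamma (n : ℝ) := Real.Gamma_pos_of_pos (by exact_mod_cast Nat.pos_of_ne_zero hn0)
  have hNne : ((n : ℝ)) ≠ 0 := Nat.cast_ne_zero.mpr hn0
  have hΓ1 : Real.Gamma ((n + 1 : ℕ) : ℝ) = (n : ℝ) * Real.Gamma (n : ℝ) := by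
    push_cast
    rw [Real.Gamma_add_one hNne]
  have hσj : σ ^ j = σ ^ (j - 1) * σ := by
    rw [← pow_succ]; congr 1; omega
  simp only [Vngg, hΓ1, Nat.add_sub_cancel, hσj]
  have hcastj : ∀ l : ℕ, ((j + 1 : ℕ) : ℝ) - (l : ℝ) / σ = (j : ℝ) + 1 - (l : ℝ) / σ := by
    intro l; push_cast; ring
  simp only [hcastj]
  set S0 := ∑ l ∈ Finset.range n, ((n - 1).choose l : ℝ) * (-1 : ℝ) ^ l *
      β ^ ((l : ℝ) / σ) * incGamma ((j : ℝ) - (l : ℝ) / σ) β with hS0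
  set S1 := ∑ l ∈ Finset.range (n + 1), (n.choose l : ℝ) * (-1 : ℝ) ^ l *
      β ^ ((l : ℝ) / σ) * incGamma ((j : ℝ) + 1 - (l : ℝ) / σ) β with hS1
  set S2 := ∑ l ∈ Finset.range (n + 1), (n.choose l : ℝ) * (-1 : ℝ) ^ l *
      β ^ ((l : ℝ) / σ) * incGamma ((j : ℝ) - (l : ℝ) / σ) β with hS2
  field_simp
  linear_combination (-1 : ℝ) * key
end

section
/- For $\sigma \in (0,1)$, $\beta > 0$, integers $1 \le j \le n$, the predictive weights of the NGG$(\sigma,\beta)$ process sum to one: $\frac{\sigma}{n}\cdot \frac{A_{n,j+1}}{B_{n,j}} + (n - j\sigma)\cdot\frac{A_{n,j}}{n\, B_{n,j}} = 1$, where $A_{n,j} = \sum_{l=0}^{n}\binom{n}{l}(-1)^l \beta^{l/\sigma}\Gamma(j - l/\sigma; \beta)$ and $B_{n,j} = \sum_{l=0}^{n-1}\binom{n-1}{l}(-1)^l\beta^{l/\sigma}\Gamma(j - l/\sigma;\beta)$, i.e., $\sigma A_{n,j+1} + (n - j\sigma) A_{n,j} = n\, B_{n,j}$. -/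
open MeasureTheory Real Set Finset

noncomputable def Angg (σ β : ℝ) (n j : ℕ) : ℝ :=
  ∑ l ∈ Finset.range (n + 1), (n.choose l : ℝ) * (-1 : ℝ) ^ l * β ^ ((l : ℝ) / σ) *
    incGamma ((j : ℝ) - (l : ℝ) / σ) β

noncomputable def Bngg (σ β : ℝ) (n j : ℕ) : ℝ :=
  ∑ l ∈ Finset.range n, ((n - 1).choose l : ℝ) * (-1 : ℝ) ^ l * β ^ ((l : ℝ) / σ) *
    incGamma ((j : ℝ) - (l : ℝ) / σ) β

lemma incG_integrable (a β : ℝ) (hβ : 0 < β) :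
    IntegrableOn (fun y => y ^ (a - 1) * Real.exp (-y)) (Ioi β) := by
  have hmeas : AEStronglyMeasurable (fun y => y ^ (a - 1) * Real.exp (-y))
      (volume.restrict (Ioi β)) := by
    apply ContinuousOn.aestronglyMeasurable _ measurableSet_Ioi
    apply ContinuousOn.mul _ (Real.continuous_exp.comp continuous_neg).continuousOn
    exact fun y hy => (Real.continuousAt_rpow_const y (a-1)
      (Or.inl (hβ.trans hy).ne')).continuousWithinAt
  obtain ⟨X, hX⟩ : ∃ X, ∀ y ≥ X, y ^ (a - 1) * Real.exp (-((1:ℝ)/2) * y) ≤ 1 := by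
    have h := tendsto_rpow_mul_exp_neg_mul_atTop_nhds_zero (a - 1) (1/2) (by norm_num)
    have h2 := h.eventually (eventually_le_nhds (by norm_num : (0:ℝ) < 1))
    rcases (Filter.eventually_atTop.mp h2) with ⟨X, hX⟩
    exact ⟨X, fun y hy => hX y hy⟩
  obtain ⟨M0, hM0⟩ : ∃ M0, ∀ y ∈ Icc β (max X β),
      y ^ (a - 1) * Real.exp (-((1:ℝ)/2) * y) ≤ M0 := by
    have hcont : ContinuousOn (fun y => y ^ (a - 1) * Real.exp (-((1:ℝ)/2) * y))
        (Icc β (max X β)) := by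
      apply ContinuousOn.mul _ (by fun_prop)
      exact fun y hy => (Real.continuousAt_rpow_const y (a-1)
        (Or.inl (hβ.trans_le hy.1).ne')).continuousWithinAt
    rcases (isCompact_Icc (a := β) (b := max X β)).exists_bound_of_continuousOn hcont
      with ⟨M0, hM0⟩
    exact ⟨M0, fun y hy => ((le_abs_self _).trans_eq (Real.norm_eq_abs _).symm).trans (hM0 y hy)⟩
  set M := max M0 1 with hM
  have hbound : ∀ y ∈ Ioi β, ‖y ^ (a - 1) * Real.exp (-y)‖ ≤ M * Real.exp (-((1:ℝ)/2) * y) := by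
    intro y hy
    have hy0 : (0:ℝ) < y := hβ.trans hy
    have hkey : y ^ (a - 1) * Real.exp (-((1:ℝ)/2) * y) ≤ M := by
      rcases le_total y (max X β) with h | h
      · exact (hM0 y ⟨le_of_lt hy, h⟩).trans (le_max_left _ _)
      · exact (hX y ((le_max_left X β).trans h)).trans (le_max_right _ _)
    have h1 : ‖y ^ (a - 1) * Real.exp (-y)‖ = y ^ (a-1) * Real.exp (-y) := by
      rw [Real.norm_eq_abs, abs_of_nonneg]
      positivity
    rw [h1]
    have h2 : Real.exp (-y) = Real.exp (-((1:ℝ)/2) * y) * Real.exp (-((1:ℝ)/2) * y) := by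
      rw [← Real.exp_add]; ring_nf
    rw [h2, ← mul_assoc]
    exact mul_le_mul_of_nonneg_right hkey (Real.exp_nonneg _)
  have hint : IntegrableOn (fun y => M * Real.exp (-((1:ℝ)/2) * y)) (Ioi β) :=
    (exp_neg_integrableOn_Ioi β (by norm_num : (0:ℝ) < 1/2)).const_mul M
  exact hint.mono' hmeas ((ae_restrict_iff' measurableSet_Ioi).mpr (ae_of_all _ hbound))

lemma incGamma_rec (a β : ℝ) (hβ : 0 < β) :
    incGamma (a + 1) β = β ^ a * Real.exp (-β) + a * incGamma a β := by
  have hderiv : ∀ y ∈ Ici β, HasDerivAt (fun y : ℝ => -(y ^ a * Real.exp (-y)))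
      (y ^ a * Real.exp (-y) - a * (y ^ (a - 1) * Real.exp (-y))) y := by
    intro y hy
    have hy0 : y ≠ 0 := (hβ.trans_le hy).ne'
    have h1 : HasDerivAt (fun y : ℝ => y ^ a) (a * y ^ (a - 1)) y :=
      Real.hasDerivAt_rpow_const (Or.inl hy0)
    have h2 : HasDerivAt (fun y : ℝ => Real.exp (-y)) (-Real.exp (-y)) y := by
      simpa [Function.comp_def] using (Real.hasDerivAt_exp (-y)).comp y (hasDerivAt_neg y)
    have : HasDerivAt (fun y : ℝ => -(y ^ a * Real.exp (-y)))
        (-(a * y ^ (a - 1) * Real.exp (-y) + y ^ a * -Real.exp (-y))) y := (h1.mul h2).neg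
    convert this using 1
    ring
  have hint : IntegrableOn
      (fun y => y ^ a * Real.exp (-y) - a * (y ^ (a - 1) * Real.exp (-y))) (Ioi β) := by
    have h1 := incG_integrable (a + 1) β hβ
    simp only [add_sub_cancel_right] at h1
    exact h1.sub ((incG_integrable a β hβ).const_mul a)
  have htend : Filter.Tendsto (fun y : ℝ => -(y ^ a * Real.exp (-y)))
      Filter.atTop (nhds 0) := by
    have h := (tendsto_rpow_mul_exp_neg_mul_atTop_nhds_zero a 1 one_pos).neg
    simp only [neg_zero] at h
    refine h.congr (fun y => ?_)
    simp [one_mul]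
  have key := integral_Ioi_of_hasDerivAt_of_tendsto' hderiv hint htend
  rw [integral_sub ((by have h := incG_integrable (a+1) β hβ; simp only [add_sub_cancel_right] at h; exact h))
      ((incG_integrable a β hβ).const_mul a), integral_const_mul] at key
  have hA : incGamma (a + 1) β = ∫ y in Ioi β, y ^ a * Real.exp (-y) := by
    unfold incGamma; simp [add_sub_cancel_right]
  have hB : incGamma a β = ∫ y in Ioi β, y ^ (a - 1) * Real.exp (-y) := rfl
  rw [hA, hB]
  linarith [key]

lemma Bngg_pos (σ β : ℝ) (hσ0 : 0 < σ) (hβ : 0 < β) (n j : ℕ) (hn : 1 ≤ n) :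
    0 < Bngg σ β n j := by
  set g : ℝ → ℝ := fun y =>
    y ^ ((j : ℝ) - 1) * (1 - (β / y) ^ (1 / σ)) ^ (n - 1) * Real.exp (-y) with hg
  set F : ℝ → ℝ := fun y => ∑ l ∈ Finset.range n,
      ((n - 1).choose l : ℝ) * (-1 : ℝ) ^ l * β ^ ((l : ℝ) / σ) *
        (y ^ (((j : ℝ) - (l : ℝ) / σ) - 1) * Real.exp (-y)) with hF
  have hterm : ∀ l, IntegrableOn (fun y =>
      ((n - 1).choose l : ℝ) * (-1 : ℝ) ^ l * β ^ ((l : ℝ) / σ) *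
        (y ^ (((j : ℝ) - (l : ℝ) / σ) - 1) * Real.exp (-y))) (Ioi β) :=
    fun l => (incG_integrable _ β hβ).const_mul _
  have hFint : IntegrableOn F (Ioi β) := by
    rw [hF]; exact MeasureTheory.integrable_finset_sum _ (fun l _ => hterm l)
  have hEq : EqOn F g (Ioi β) := by
    intro y hy
    have hy0 : (0:ℝ) < y := hβ.trans hy
    have hbinom : (1 - (β / y) ^ (1 / σ)) ^ (n - 1)
        = ∑ l ∈ Finset.range n, ((n - 1).choose l : ℝ) *
            ((-1 : ℝ) ^ l * ((β / y) ^ (1 / σ)) ^ l) := by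
      have h := add_pow (-((β / y) ^ (1 / σ))) 1 (n - 1)
      have hn1 : n - 1 + 1 = n := Nat.succ_pred_eq_of_pos hn
      rw [hn1] at h
      calc (1 - (β / y) ^ (1 / σ)) ^ (n - 1)
          = (-((β / y) ^ (1 / σ)) + 1) ^ (n - 1) := by ring_nf
        _ = _ := by
            rw [h]; apply Finset.sum_congr rfl; intro l _; ring
    have hpow : ∀ l : ℕ, ((β / y) ^ (1 / σ)) ^ l = β ^ ((l:ℝ)/σ) * y ^ (-((l:ℝ)/σ)) := by
      intro l
      have h1 : ((β / y) ^ (1 / σ)) ^ l = (β / y) ^ ((l:ℝ)/σ) := by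
        rw [← Real.rpow_natCast ((β / y) ^ (1 / σ)) l, ← Real.rpow_mul (by positivity)]
        congr 1; ring
      rw [h1, Real.div_rpow hβ.le hy0.le, Real.rpow_neg hy0.le, div_eq_mul_inv]
    have hgy : g y = ∑ l ∈ Finset.range n, ((n - 1).choose l : ℝ) *
        ((-1 : ℝ) ^ l * (β ^ ((l:ℝ)/σ) * y ^ (-((l:ℝ)/σ)))) *
          (y ^ ((j:ℝ) - 1) * Real.exp (-y)) := by
      rw [hg]
      simp only [hbinom, hpow, Finset.sum_mul, Finset.mul_sum]
      apply Finset.sum_congr rfl; intro l _; ring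
    rw [hgy, hF]
    apply Finset.sum_congr rfl; intro l _
    have hy' : y ^ ((j:ℝ) - (l:ℝ)/σ - 1) = y ^ ((j:ℝ) - 1) * y ^ (-((l:ℝ)/σ)) := by
      rw [← Real.rpow_add hy0]; congr 1; ring
    rw [hy']; ring
  have hrep : Bngg σ β n j = ∫ y in Ioi β, g y := by
    have hsum : Bngg σ β n j = ∫ y in Ioi β, F y := by
      rw [hF, MeasureTheory.integral_finset_sum _ (fun l _ => hterm l)]
      unfold Bngg incGamma
      apply Finset.sum_congr rfl; intro l _
      rw [MeasureTheory.integral_const_mul]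
    rw [hsum]
    exact setIntegral_congr_fun measurableSet_Ioi hEq
  have hgpos : ∀ y ∈ Ioi β, 0 < g y := by
    intro y hy
    have hy0 : (0:ℝ) < y := hβ.trans hy
    have h1 : (β / y) ^ (1 / σ) < 1 :=
      Real.rpow_lt_one (by positivity) ((div_lt_one hy0).mpr hy) (by positivity)
    have h2 : 0 < 1 - (β / y) ^ (1 / σ) := by linarith
    rw [hg]
    have := Real.rpow_pos_of_pos hy0 ((j:ℝ) - 1)
    positivity
  rw [hrep]
  rw [setIntegral_pos_iff_support_of_nonneg_ae]
  · have hsub : Ioi β ⊆ Function.support g ∩ Ioi β :=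
      fun y hy => ⟨(hgpos y hy).ne', hy⟩
    calc (0:ENNReal) < volume (Ioi β) := by rw [Real.volume_Ioi]; exact ENNReal.zero_lt_top
      _ ≤ _ := measure_mono hsub
  · rw [Filter.EventuallyLE, ae_restrict_iff' measurableSet_Ioi]
    exact ae_of_all _ (fun y hy => (hgpos y hy).le)
  · exact hFint.congr_fun hEq measurableSet_Ioi

lemma choose_cast_id (n l : ℕ) (hl : l < n) :
    (n.choose l : ℝ) * ((n:ℝ) - (l:ℝ)) = (n:ℝ) * ((n-1).choose l : ℝ) := by
  obtain ⟨m, rfl⟩ : ∃ m, n = m + 1 :=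
    ⟨n - 1, (Nat.succ_pred_eq_of_pos (Nat.zero_lt_of_lt hl)).symm⟩
  have hnat : (m+1).choose l * (m + 1 - l) = (m+1) * m.choose l := by
    rw [Nat.add_one_mul_choose_eq, Nat.choose_succ_right_eq]
  have hle : l ≤ m + 1 := hl.le
  have hcast := congrArg (fun k : ℕ => (k : ℝ)) hnat
  push_cast [Nat.cast_sub hle] at hcast
  simpa using hcast

lemma key_identity
    (σ β : ℝ) (hσ0 : 0 < σ) (hβ : 0 < β)
    (n j : ℕ) (hj1 : 1 ≤ j) (hjn : j ≤ n) :
    σ * Angg σ β n (j + 1) + ((n : ℝ) - (j : ℝ) * σ) * Angg σ β n j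
        = (n : ℝ) * Bngg σ β n j := by
  have hn : 1 ≤ n := hj1.trans hjn
  have hrec : ∀ l : ℕ, incGamma (((j+1:ℕ):ℝ) - (l:ℝ)/σ) β
      = β ^ ((j:ℝ) - (l:ℝ)/σ) * Real.exp (-β)
        + ((j:ℝ) - (l:ℝ)/σ) * incGamma ((j:ℝ) - (l:ℝ)/σ) β := by
    intro l
    rw [show (((j+1:ℕ):ℝ) - (l:ℝ)/σ) = ((j:ℝ) - (l:ℝ)/σ) + 1 by push_cast; ring]
    exact incGamma_rec _ β hβ
  set Γl : ℕ → ℝ := fun l => incGamma ((j:ℝ) - (l:ℝ)/σ) β with hΓ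
  have hsplit : σ * Angg σ β n (j + 1) + ((n : ℝ) - (j : ℝ) * σ) * Angg σ β n j
      = (∑ l ∈ Finset.range (n+1),
          σ * Real.exp (-β) * β ^ (j:ℝ) * ((n.choose l : ℝ) * (-1:ℝ)^l))
        + ∑ l ∈ Finset.range (n+1),
            (n.choose l : ℝ) * ((n:ℝ) - (l:ℝ)) * (-1:ℝ)^l * β ^ ((l:ℝ)/σ) * Γl l := by
    unfold Angg
    simp only [hrec]
    rw [Finset.mul_sum, Finset.mul_sum, ← Finset.sum_add_distrib, ← Finset.sum_add_distrib]
    apply Finset.sum_congr rfl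
    intro l _
    have hβl : β ^ ((l:ℝ)/σ) * β ^ ((j:ℝ) - (l:ℝ)/σ) = β ^ (j:ℝ) := by
      rw [← Real.rpow_add hβ]; congr 1; ring
    have hσl : σ * ((l:ℝ)/σ) = (l:ℝ) := by field_simp
    simp only [hΓ]
    linear_combination (σ * Real.exp (-β) * (n.choose l : ℝ) * (-1:ℝ)^l) * hβl
      - ((n.choose l : ℝ) * (-1:ℝ)^l * β ^ ((l:ℝ)/σ) * incGamma ((j:ℝ) - (l:ℝ)/σ) β) * hσl
  have halt : ∑ l ∈ Finset.range (n+1), (n.choose l : ℝ) * (-1:ℝ)^l = 0 := by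
    have h := Int.alternating_sum_range_choose (n := n)
    rw [if_neg (by omega)] at h
    have h2 := congrArg (fun z : ℤ => (z : ℝ)) h
    push_cast at h2
    rw [← h2]
    apply Finset.sum_congr rfl; intro l _; ring
  have hsum2 : ∑ l ∈ Finset.range (n+1),
      (n.choose l : ℝ) * ((n:ℝ) - (l:ℝ)) * (-1:ℝ)^l * β ^ ((l:ℝ)/σ) * Γl l
      = (n:ℝ) * Bngg σ β n j := by
    rw [Finset.sum_range_succ]
    have hlast : (n.choose n : ℝ) * ((n:ℝ) - (n:ℝ)) * (-1:ℝ)^n * β ^ ((n:ℝ)/σ) * Γl n = 0 := by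
      ring
    rw [hlast, add_zero]
    unfold Bngg
    rw [Finset.mul_sum]
    apply Finset.sum_congr rfl
    intro l hl
    rw [Finset.mem_range] at hl
    have hcc := choose_cast_id n l hl
    simp only [hΓ]
    linear_combination ((-1:ℝ)^l * β ^ ((l:ℝ)/σ) * incGamma ((j:ℝ) - (l:ℝ)/σ) β) * hcc
  rw [hsplit, ← Finset.mul_sum, hsum2, halt, mul_zero, zero_add]

theorem ngg_weights_sum_to_one
    (σ β : ℝ) (hσ0 : 0 < σ) (hσ1 : σ < 1) (hβ : 0 < β)
    (n j : ℕ) (hj1 : 1 ≤ j) (hjn : j ≤ n) :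
    ((σ / n) * (Angg σ β n (j + 1) / Bngg σ β n j) +
        ((n : ℝ) - (j : ℝ) * σ) * (Angg σ β n j / ((n : ℝ) * Bngg σ β n j)) = 1) ∧
    (σ * Angg σ β n (j + 1) + ((n : ℝ) - (j : ℝ) * σ) * Angg σ β n j
        = (n : ℝ) * Bngg σ β n j) := by
  have hn : 1 ≤ n := hj1.trans hjn
  have hkey := key_identity σ β hσ0 hβ n j hj1 hjn
  have hB : 0 < Bngg σ β n j := Bngg_pos σ β hσ0 hβ n j hn
  have hn0 : (n:ℝ) ≠ 0 := Nat.cast_ne_zero.mpr (by omega)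
  have hBne : Bngg σ β n j ≠ 0 := hB.ne'
  refine ⟨?_, hkey⟩
  field_simp
  linear_combination hkey
end
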